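/- arXiv:2407.12868 — 5 statements merged into one kernel-verified Lean document; each statement's English description precedes it below -/
import Mathlib

section
/- For all n ≥ 0 and N ≥ 1, the sum of 4N consecutive Fibonacci numbers satisfies ∑_{i=0}^{4N-1} F(n+i) = F(2N) · L(n+2N+1), where L is the Lucas sequence. -/
open Nat

/-- Catalan/d'Ocagne type identity over ℤ. -/
lemma fib_catalan (k : ℕ) : ∀ m : ℕ,
    (fib (m + k + 1) : ℤ) * fib (k + 1) - fib (m + k + 2) * fib k
      = (-1) ^ k * fib (m + 1) := by
  induction k with
  | zero => intro m; simp
  | succ k ih =>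
    intro m
    have h1 : (fib (m + (k+1) + 1) : ℤ) = fib (m + k + 1) + fib (m + k) := by
      have h' : m + (k+1) + 1 = m + k + 2 := by omega
      rw [h', Nat.fib_add_two]; push_cast; ring
    have h2 : (fib (m + (k+1) + 2) : ℤ) = fib (m + k + 2) + fib (m + k + 1) := by
      have h' : m + (k+1) + 2 = m + k + 1 + 2 := by omega
      rw [h', Nat.fib_add_two]; push_cast; ring
    have h3 : (fib (k + 2) : ℤ) = fib (k + 1) + fib k := by
      rw [Nat.fib_add_two]; push_cast; ring
    have ihm := ih m
    have key : (fib (m + (k+1) + 1) : ℤ) * fib (k + 2) - fib (m + (k+1) + 2) * fib (k+1)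
        = -((fib (m + k + 1) : ℤ) * fib (k + 1) - fib (m + k + 2) * fib k) := by
      have hmk : (fib (m + k + 2) : ℤ) = fib (m + k + 1) + fib (m + k) := by
        rw [Nat.fib_add_two]; push_cast; ring
      rw [h1, h2, h3, hmk]; ring
    rw [key, ihm]; ring

/-- Shifted sum of Fibonacci numbers. -/
lemma fib_sum_shift (n : ℕ) : ∀ m : ℕ,
    (∑ i ∈ Finset.range m, fib (n + i)) + fib (n + 1) = fib (n + m + 1) := by
  intro m
  induction m with
  | zero => simp
  | succ m ih =>
    rw [Finset.sum_range_succ]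
    have : n + (m + 1) + 1 = (n + m) + 2 := by omega
    rw [this, Nat.fib_add_two]
    omega

theorem fib_sum_4N (F L : ℕ → ℕ)
    (hF0 : F 0 = 0) (hF1 : F 1 = 1)
    (hFrec : ∀ n, F (n + 2) = F (n + 1) + F n)
    (hL0 : L 0 = 2) (hL1 : L 1 = 1)
    (hLrec : ∀ n, L (n + 2) = L (n + 1) + L n)
    (n N : ℕ) (hN : 1 ≤ N) :
    (∑ i ∈ Finset.range (4 * N), F (n + i)) = F (2 * N) * L (n + 2 * N + 1) := by
  -- F = fib
  have hF : ∀ k, F k = fib k := by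
    intro k
    induction k using Nat.strong_induction_on with
    | _ k ih =>
      match k with
      | 0 => simpa using hF0
      | 1 => simpa using hF1
      | (k+2) =>
        rw [hFrec, Nat.fib_add_two, ih (k+1) (by omega), ih k (by omega)]
        ring
  -- L (k+1) = fib k + fib (k+2)
  have hL : ∀ k, L (k + 1) = fib k + fib (k + 2) := by
    intro k
    induction k using Nat.strong_induction_on with
    | _ k ih =>
      match k with
      | 0 => simp [hL1]
      | 1 => simp [hLrec 0, hL0, hL1, Nat.fib_add_two]
      | (k+2) =>
        rw [hLrec (k+1), ih (k+1) (by omega), ih k (by omega)]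
        have e1 : fib (k + 2 + 2) = fib (k + 2) + fib (k + 2 + 1) := Nat.fib_add_two
        have e2 : fib (k + 2) = fib k + fib (k + 1) := Nat.fib_add_two
        have e3 : fib (k + 1 + 2) = fib (k + 1) + fib (k + 1 + 1) := Nat.fib_add_two
        have e4 : fib (k + 2 + 1) = fib (k + 1 + 2) := by norm_num
        have e5 : fib (k + 1 + 1) = fib (k + 2) := by norm_num
        omega
  simp only [hF]
  rw [hL (n + 2 * N)]
  -- Sum telescopes
  have hsum := fib_sum_shift n (4 * N)
  -- Key identity from Catalan with even k = 2N
  have hcat := fib_catalan (2 * N) n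
  have heven : ((-1 : ℤ)) ^ (2 * N) = 1 := by
    rw [pow_mul]; norm_num
  rw [heven, one_mul] at hcat
  -- fib addition formula: fib (n+4N+1) = fib(n+2N)*fib(2N) + fib(n+2N+1)*fib(2N+1)
  have hadd : fib (n + 2 * N + 2 * N + 1)
      = fib (n + 2 * N) * fib (2 * N) + fib (n + 2 * N + 1) * fib (2 * N + 1) :=
    Nat.fib_add (n + 2 * N) (2 * N)
  -- Combine over ℤ
  have goalZ : (fib (n + 4 * N + 1) : ℤ)
      = fib (2 * N) * (fib (n + 2 * N) + fib (n + 2 * N + 2)) + fib (n + 1) := by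
    have h4 : n + 4 * N + 1 = n + 2 * N + 2 * N + 1 := by omega
    rw [h4]
    have haddZ : (fib (n + 2 * N + 2 * N + 1) : ℤ)
        = fib (n + 2 * N) * fib (2 * N) + fib (n + 2 * N + 1) * fib (2 * N + 1) := by
      exact_mod_cast congrArg (Nat.cast : ℕ → ℤ) hadd
    -- hcat : fib(n+2N+1)*fib(2N+1) - fib(n+2N+2)*fib(2N) = fib(n+1)
    linarith [haddZ, hcat]
  have : fib (n + 4 * N + 1)
      = fib (2 * N) * (fib (n + 2 * N) + fib (n + 2 * N + 2)) + fib (n + 1) := by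
    exact_mod_cast goalZ
  omega
end

section
/- Let r ≥ 1 and define f(0)=0, f(1)=1, f(n)=r·f(n-1)+f(n-2), and g(0)=2, g(1)=r, g(n)=r·g(n-1)+g(n-2). Then for all N ≥ 0 and n ≥ 0, r · ∑_{k=0}^{4N+1} f(n+k) = g(2N+1) · (f(n+2N+1) + f(n+2N)). -/
private lemma lucas_tel (r : ℤ) (F : ℕ → ℤ)
    (hrec : ∀ k, F (k + 2) = r * F (k + 1) + F k) :
    ∀ M n, r * ∑ k ∈ Finset.range M, F (n + k + 1)
      = F (n + M + 1) + F (n + M) - F (n + 1) - F n := by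
  intro M
  induction M with
  | zero => intro n; simp
  | succ M ih =>
    intro n
    rw [Finset.sum_range_succ, mul_add, ih]
    simp only [show n + (M + 1) + 1 = n + M + 2 from by omega,
      show n + (M + 1) = n + M + 1 from by omega]
    linarith [hrec (n + M)]

private lemma lucas_key (r : ℤ) (F G : ℕ → ℤ)
    (hF : ∀ k, F (k + 2) = r * F (k + 1) + F k)
    (hG0 : G 0 = 2) (hG1 : G 1 = r)
    (hG : ∀ k, G (k + 2) = r * G (k + 1) + G k) :
    ∀ j b, F (b + 2 * j) + (-1 : ℤ) ^ j * F b = G j * F (b + j) := by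
  have main : ∀ j, (∀ b, F (b + 2 * j) + (-1 : ℤ) ^ j * F b = G j * F (b + j)) ∧
      (∀ b, F (b + 2 * (j + 1)) + (-1 : ℤ) ^ (j + 1) * F b = G (j + 1) * F (b + (j + 1))) := by
    intro j
    induction j with
    | zero =>
      constructor
      · intro b; simp [hG0]; ring
      · intro b
        simp only [show b + 2 * (0 + 1) = b + 2 from by omega,
          show b + (0 + 1) = b + 1 from by omega, hG1]
        linear_combination hF b
    | succ j ih =>
      refine ⟨ih.2, ?_⟩
      intro b
      have h1 := ih.2 (b + 1)
      have h2 := ih.1 (b + 2)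
      simp only [show b + 1 + 2 * (j + 1) = b + 2 * j + 3 from by omega,
        show b + 1 + (j + 1) = b + j + 2 from by omega,
        show b + 2 + 2 * j = b + 2 * j + 2 from by omega,
        show b + 2 + j = b + j + 2 from by omega] at h1 h2
      simp only [show b + 2 * (j + 1 + 1) = b + 2 * j + 4 from by omega,
        show b + (j + 1 + 1) = b + j + 2 from by omega]
      rw [hG j]
      have e1 := hF (b + 2 * j + 2)
      have e2 := hF b
      simp only [show b + 2 * j + 2 + 2 = b + 2 * j + 4 from by omega,
        show b + 2 * j + 2 + 1 = b + 2 * j + 3 from by omega] at e1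
      linear_combination r * h1 + h2 + e1 - (-1 : ℤ) ^ j * e2 + (pow_succ (-1 : ℤ) (j+1)) * 0
  intro j b; exact (main j).1 b

theorem lucas_seq_sum_4N_plus_2 (r : ℕ) (hr : 1 ≤ r) (f g : ℕ → ℕ)
    (hf0 : f 0 = 0) (hf1 : f 1 = 1)
    (hfrec : ∀ n, f (n + 2) = r * f (n + 1) + f n)
    (hg0 : g 0 = 2) (hg1 : g 1 = r)
    (hgrec : ∀ n, g (n + 2) = r * g (n + 1) + g n)
    (N n : ℕ) :
    r * (∑ k ∈ Finset.range (4 * N + 2), f (n + k)) =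
      g (2 * N + 1) * (f (n + 2 * N + 1) + f (n + 2 * N)) := by
  set F : ℕ → ℤ := fun k => if k = 0 then (1 : ℤ) else (f (k - 1) : ℤ) with hFdef
  have hFsucc : ∀ k, F (k + 1) = (f k : ℤ) := by intro k; simp [hFdef]
  have hF0 : F 0 = (1 : ℤ) := by simp [hFdef]
  have hFrec : ∀ k, F (k + 2) = (r : ℤ) * F (k + 1) + F k := by
    intro k
    cases k with
    | zero => simp [hFdef, hf0, hf1]
    | succ k =>
      rw [show k + 1 + 2 = k + 2 + 1 from by omega, hFsucc, hFsucc, hFsucc, hfrec k]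
      push_cast; ring
  set G : ℕ → ℤ := fun k => (g k : ℤ) with hGdef
  have hG0 : G 0 = 2 := by simp [hGdef, hg0]
  have hG1 : G 1 = (r : ℤ) := by simp [hGdef, hg1]
  have hGrec : ∀ k, G (k + 2) = (r : ℤ) * G (k + 1) + G k := by
    intro k; simp only [hGdef, hgrec k]; push_cast; ring
  have tel := lucas_tel r F hFrec (4 * N + 2) n
  have k1 := lucas_key r F G hFrec hG0 hG1 hGrec (2 * N + 1) (n + 1)
  have k2 := lucas_key r F G hFrec hG0 hG1 hGrec (2 * N + 1) n
  have hodd : (-1 : ℤ) ^ (2 * N + 1) = -1 := Odd.neg_one_pow ⟨N, by ring⟩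
  rw [hodd] at k1 k2
  simp only [show n + 1 + 2 * (2 * N + 1) = n + 4 * N + 3 from by omega,
    show n + 1 + (2 * N + 1) = n + 2 * N + 2 from by omega,
    show n + 2 * (2 * N + 1) = n + 4 * N + 2 from by omega,
    show n + (2 * N + 1) = n + 2 * N + 1 from by omega] at k1 k2
  simp only [show n + (4 * N + 2) + 1 = n + 4 * N + 3 from by omega,
    show n + (4 * N + 2) = n + 4 * N + 2 from by omega] at tel
  have goalZ : (r : ℤ) * ∑ k ∈ Finset.range (4 * N + 2), F (n + k + 1)
      = G (2 * N + 1) * (F (n + 2 * N + 2) + F (n + 2 * N + 1)) := by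
    rw [tel]; linarith [k1, k2]
  simp only [hFsucc] at goalZ
  have : ((r * ∑ k ∈ Finset.range (4 * N + 2), f (n + k) : ℕ) : ℤ)
      = ((g (2 * N + 1) * (f (n + 2 * N + 1) + f (n + 2 * N)) : ℕ) : ℤ) := by
    push_cast
    simpa [hGdef] using goalZ
  exact_mod_cast this
end

section
/- There is no positive integer c and function j : ℕ → ℕ such that for all n ≥ 0, P(n) + P(n+1) + P(n+2) = c · P(j(n)), where P is the Pell sequence. More generally, for every N ≥ 1, there is no constant c such that the sum of 2N+1 consecutive Pell numbers always equals c times some Pell number. -/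
def Eaux : ℕ → ℤ
  | 0 => 1
  | 1 => 1
  | (k+2) => Eaux k - 2 * Eaux (k+1)

lemma Eaux_rec (k : ℕ) : Eaux (k+2) = Eaux k - 2 * Eaux (k+1) := rfl

theorem pell_odd_sum_not_multiple (P : ℕ → ℕ)
    (h0 : P 0 = 0) (h1 : P 1 = 1)
    (hrec : ∀ n, P (n + 2) = 2 * P (n + 1) + P n)
    (N : ℕ) (hN : 1 ≤ N) :
    ¬ ∃ (c : ℕ) (j : ℕ → ℕ), 0 < c ∧
      ∀ n, (∑ i ∈ Finset.range (2 * N + 1), P (n + i)) = c * P (j n) := by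
  obtain ⟨K, rfl⟩ : ∃ K, N = K + 1 := ⟨N - 1, by omega⟩
  rintro ⟨c, j, hc, hj⟩
  have hrange : 2 * (K + 1) + 1 = 2 * K + 3 := by ring
  simp only [hrange] at hj
  set S : ℕ → ℕ := fun n => ∑ i ∈ Finset.range (2 * K + 3), P (n + i) with hSdef
  have hj' : ∀ n, S n = c * P (j n) := hj
  have PN : ∀ a b : ℕ, a = b → P a = P b := fun a b h => by rw [h]
  have EB : ∀ a b : ℕ, a = b → Eaux a = Eaux b := fun a b h => by rw [h]
  -- basic facts
  have Ppos : ∀ k, 0 < P (k + 1) := by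
    intro k; induction k with
    | zero => simpa [h1] using Nat.one_pos
    | succ k ih => rw [hrec]; omega
  have Pmono1 : ∀ k, P k < P (k + 1) := by
    intro k
    cases k with
    | zero => simp [h0, h1]
    | succ k => rw [hrec]; have := Ppos k; omega
  have mono : StrictMono P := strictMono_nat_of_lt_succ Pmono1
  have Pdouble : ∀ k, 2 * P k ≤ P (k + 1) := by
    intro k
    cases k with
    | zero => simp [h0]
    | succ k => rw [hrec]; omega
  have Pfive : ∀ k, 5 * P k ≤ P (k + 2) := by
    intro k; rw [hrec]; have := Pdouble k; omega
  have Ptriple : ∀ k, P (k + 2) ≤ 3 * P (k + 1) := by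
    intro k; rw [hrec]; have := Pmono1 k; omega
  -- the key identity
  have ident : ∀ M n, 2 * (∑ i ∈ Finset.range (M + 1), P (n + i)) + P (n + 1)
      = P n + P (n + M) + P (n + M + 1) := by
    intro M
    induction M with
    | zero =>
      intro n
      have b1 : P (n + 0) = P n := PN _ _ (by omega)
      have b2 : P (n + 0 + 1) = P (n + 1) := PN _ _ (by omega)
      rw [Finset.sum_range_one, b1, b2]
      omega
    | succ M ih =>
      intro n
      rw [Finset.sum_range_succ, Nat.mul_add]
      have h2 := ih n
      have h3 := hrec (n + M)
      have b1 : P (n + (M + 1)) = P (n + M + 1) := PN _ _ (by omega)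
      have b2 : P (n + (M + 1) + 1) = P (n + M + 2) := PN _ _ (by omega)
      rw [b1, b2]
      omega
  -- shift identity
  have shiftSum : ∀ L n, (∑ i ∈ Finset.range L, P (n + 1 + i)) + P n
      = (∑ i ∈ Finset.range L, P (n + i)) + P (n + L) := by
    intro L n
    induction L with
    | zero => simp
    | succ L ih =>
      rw [Finset.sum_range_succ, Finset.sum_range_succ]
      have b1 : P (n + 1 + L) = P (n + (L + 1)) := PN _ _ (by omega)
      omega
  have shift : ∀ n, S (n + 1) + P n = S n + P (n + (2 * K + 3)) := by
    intro n; exact shiftSum (2 * K + 3) n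
  -- bounds
  have identS : ∀ n, 2 * S n + P (n + 1)
      = P n + P (n + (2 * K + 2)) + P (n + (2 * K + 2) + 1) := by
    intro n; exact ident (2 * K + 2) n
  have upper : ∀ n, S n < P (n + 2 * K + 3) := by
    intro n
    have h2 := identS n
    have h3 : P n < P (n + 1) := Pmono1 n
    have h4 : P (n + (2 * K + 2)) < P (n + (2 * K + 2) + 1) := Pmono1 _
    have b1 : P (n + (2 * K + 2) + 1) = P (n + 2 * K + 3) := PN _ _ (by omega)
    omega
  have lower : ∀ n, P (n + 2 * K + 2) < S n := by
    intro n
    have hsplit : S n = (∑ i ∈ Finset.range (2 * K + 1), P (n + i))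
        + P (n + (2 * K + 1)) + P (n + (2 * K + 2)) := by
      show (∑ i ∈ Finset.range (2 * K + 3), P (n + i)) = _
      rw [Finset.sum_range_succ, Finset.sum_range_succ]
    have h5 : 0 < P (n + (2 * K + 1)) := by
      have := Ppos (n + 2 * K)
      have b : P (n + 2 * K + 1) = P (n + (2 * K + 1)) := PN _ _ (by omega)
      omega
    have b2 : P (n + (2 * K + 2)) = P (n + 2 * K + 2) := PN _ _ (by omega)
    omega
  have Spos : ∀ n, 0 < S n := by
    intro n
    have := lower n
    omega
  -- j steps by one
  have jstep : ∀ n, j (n + 1) = j n + 1 := by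
    intro n
    have hlt : j n < j (n + 1) := by
      have h2 : c * P (j n) < P (n + 2 * K + 3) := by rw [← hj']; exact upper n
      have h3 : P (n + 2 * K + 3) < c * P (j (n + 1)) := by
        have h := lower (n + 1)
        have b : P (n + 1 + 2 * K + 2) = P (n + 2 * K + 3) := PN _ _ (by omega)
        rw [b, hj' (n + 1)] at h
        exact h
      have h4 : c * P (j n) < c * P (j (n + 1)) := lt_trans h2 h3
      have h5 : P (j n) < P (j (n + 1)) := lt_of_mul_lt_mul_left h4 (Nat.zero_le c)
      exact mono.lt_iff_lt.mp h5
    by_contra hne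
    have hge : j n + 2 ≤ j (n + 1) := by omega
    have h6 : 5 * P (j n) ≤ P (j (n + 1)) := by
      calc 5 * P (j n) ≤ P (j n + 2) := Pfive (j n)
        _ ≤ P (j (n + 1)) := mono.le_iff_le.mpr hge
    have h7 : 5 * S n ≤ S (n + 1) := by
      rw [hj' n, hj' (n + 1)]
      calc 5 * (c * P (j n)) = c * (5 * P (j n)) := by ring
        _ ≤ c * P (j (n + 1)) := Nat.mul_le_mul_left c h6
    have h8 := shift n
    have h9 : P (n + (2 * K + 3)) ≤ 3 * P (n + 2 * K + 2) := by
      have h := Ptriple (n + 2 * K + 1)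
      have b1 : P (n + 2 * K + 1 + 2) = P (n + (2 * K + 3)) := PN _ _ (by omega)
      have b2 : P (n + 2 * K + 1 + 1) = P (n + 2 * K + 2) := PN _ _ (by omega)
      omega
    have h10 := lower n
    have h11 := Spos n
    omega
  have jlin : ∀ n, j n = j 0 + n := by
    intro n; induction n with
    | zero => rfl
    | succ n ih => rw [jstep n, ih]; omega
  set m := j 0 with hm
  have hm0 : c * P m = S 0 := (hj' 0).symm
  have hm1 : c * P (m + 1) = S 1 := by
    have h := (hj' 1).symm; rw [jlin 1] at h; exact h
  -- the two equations
  have hP2 : P 2 = 2 := by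
    have h := hrec 0
    rw [PN (0 + 2) 2 (by omega), PN (0 + 1) 1 (by omega), h0, h1] at h
    omega
  have eq1 : P (2 * K + 2) + P (2 * K + 3) = 2 * (c * P m) + 1 := by
    have h := identS 0
    rw [PN (0 + 1) 1 (by omega), PN (0 + (2 * K + 2)) (2 * K + 2) (by omega),
        PN (0 + (2 * K + 2) + 1) (2 * K + 3) (by omega), h0, h1] at h
    rw [hm0]
    omega
  have eq2 : P (2 * K + 3) + P (2 * K + 4) = 2 * (c * P (m + 1)) + 1 := by
    have h := identS 1
    rw [PN (1 + 1) 2 (by omega), PN (1 + (2 * K + 2)) (2 * K + 3) (by omega),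
        PN (1 + (2 * K + 2) + 1) (2 * K + 4) (by omega), h1, hP2] at h
    rw [hm1]
    omega
  -- bounds on m
  have hm_pos : 1 ≤ m := by
    by_contra h
    have hz : m = 0 := by omega
    rw [hz, h0, Nat.mul_zero] at hm0
    have := Spos 0; omega
  have hm_le : m ≤ 2 * K + 2 := by
    by_contra h
    have h2 : 2 * K + 3 ≤ m := by omega
    have h3 : P (2 * K + 3) ≤ P m := mono.le_iff_le.mpr h2
    have h4 : P m ≤ c * P m := Nat.le_mul_of_pos_left _ hc
    have h5 := upper 0
    have b : P (0 + 2 * K + 3) = P (2 * K + 3) := PN _ _ (by omega)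
    rw [b, ← hm0] at h5
    omega
  obtain ⟨D, hD⟩ : ∃ D, m + D = 2 * K + 2 := ⟨2 * K + 2 - m, by omega⟩
  -- casted equations
  have zeq1 : (P (2 * K + 2) : ℤ) + P (2 * K + 3) = 2 * ((c : ℤ) * P m) + 1 := by
    exact_mod_cast congrArg (Nat.cast : ℕ → ℤ) eq1
  have zeq2 : (P (2 * K + 3) : ℤ) + P (2 * K + 4) = 2 * ((c : ℤ) * P (m + 1)) + 1 := by
    exact_mod_cast congrArg (Nat.cast : ℕ → ℤ) eq2
  -- descent
  have main : ∀ k, k ≤ m →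
      ((∀ s, s + k = m + 1 → ((P (D + s) : ℤ) + P (D + s + 1) = 2 * c * P s + Eaux k)) ∧
       (∀ s, s + (k + 1) = m + 1 →
          ((P (D + s) : ℤ) + P (D + s + 1) = 2 * c * P s + Eaux (k + 1)))) := by
    intro k
    induction k with
    | zero =>
      intro _
      constructor
      · intro s hs
        have hs' : s = m + 1 := by omega
        subst hs'
        have b1 : P (D + (m + 1)) = P (2 * K + 3) := PN _ _ (by omega)
        have b2 : P (D + (m + 1) + 1) = P (2 * K + 4) := PN _ _ (by omega)
        rw [b1, b2]
        have hE : Eaux 0 = 1 := rfl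
        rw [hE]
        linarith [zeq2]
      · intro s hs
        have hs' : s = m := by omega
        subst hs'
        have b1 : P (D + m) = P (2 * K + 2) := PN _ _ (by omega)
        have b2 : P (D + m + 1) = P (2 * K + 3) := PN _ _ (by omega)
        rw [b1, b2]
        have hE : Eaux (0 + 1) = 1 := rfl
        rw [hE]
        linarith [zeq1]
    | succ k ih =>
      intro hk
      obtain ⟨ih1, ih2⟩ := ih (by omega)
      refine ⟨ih2, ?_⟩
      intro s hs
      have g1 := ih1 (s + 2) (by omega)
      have g2 := ih2 (s + 1) (by omega)
      have a1 : (P (D + s + 2) : ℤ) = 2 * P (D + s + 1) + P (D + s) := by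
        exact_mod_cast congrArg (Nat.cast : ℕ → ℤ) (hrec (D + s))
      have a2 : (P (D + s + 3) : ℤ) = 2 * P (D + s + 2) + P (D + s + 1) := by
        have h := hrec (D + s + 1)
        rw [PN (D + s + 1 + 2) (D + s + 3) (by omega),
            PN (D + s + 1 + 1) (D + s + 2) (by omega)] at h
        exact_mod_cast congrArg (Nat.cast : ℕ → ℤ) h
      have a3 : (P (s + 2) : ℤ) = 2 * P (s + 1) + P s := by
        exact_mod_cast congrArg (Nat.cast : ℕ → ℤ) (hrec s)
      rw [PN (D + (s + 2) + 1) (D + s + 3) (by omega),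
          PN (D + (s + 2)) (D + s + 2) (by omega)] at g1
      rw [PN (D + (s + 1) + 1) (D + s + 2) (by omega),
          PN (D + (s + 1)) (D + s + 1) (by omega)] at g2
      have a3c : (c : ℤ) * P (s + 2) = 2 * ((c : ℤ) * P (s + 1)) + (c : ℤ) * P s := by
        rw [a3]; ring
      have hE : Eaux (k + 1 + 1) = Eaux k - 2 * Eaux (k + 1) := Eaux_rec k
      rw [hE]
      linarith
  have final := ((main m le_rfl).2) 0 (by omega)
  rw [PN (D + 0) D (by omega), PN (D + 0 + 1) (D + 1) (by omega), h0] at final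
  have final' : (P D : ℤ) + P (D + 1) = Eaux (m + 1) := by
    push_cast at final
    linarith
  -- explicit values of Eaux
  have E0 : Eaux 0 = 1 := rfl
  have E1 : Eaux 1 = 1 := rfl
  have E2 : Eaux 2 = -1 := by
    have h := Eaux_rec 0
    rw [E0, E1] at h
    rw [EB 2 (0 + 2) (by omega), h]
    norm_num
  have E3 : Eaux 3 = 3 := by
    have h := Eaux_rec 1
    rw [E1, EB (1 + 1) 2 (by omega), E2] at h
    rw [EB 3 (1 + 2) (by omega), h]
    norm_num
  -- formula for Eaux
  have Eform : ∀ a, Eaux (2 * a + 2) = -((P (2 * a) : ℤ) + P (2 * a + 1)) ∧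
      Eaux (2 * a + 3) = (P (2 * a + 1) : ℤ) + P (2 * a + 2) := by
    intro a
    induction a with
    | zero =>
      constructor
      · rw [EB (2 * 0 + 2) 2 (by omega), E2,
            PN (2 * 0) 0 (by omega), PN (2 * 0 + 1) 1 (by omega), h0, h1]
        norm_num
      · rw [EB (2 * 0 + 3) 3 (by omega), E3,
            PN (2 * 0 + 1) 1 (by omega), PN (2 * 0 + 2) 2 (by omega), h1, hP2]
        norm_num
    | succ a ih =>
      obtain ⟨ihe, iho⟩ := ih
      have b1 : (P (2 * a + 2) : ℤ) = 2 * P (2 * a + 1) + P (2 * a) := by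
        exact_mod_cast congrArg (Nat.cast : ℕ → ℤ) (hrec (2 * a))
      have b2 : (P (2 * a + 3) : ℤ) = 2 * P (2 * a + 2) + P (2 * a + 1) := by
        have h := hrec (2 * a + 1)
        rw [PN (2 * a + 1 + 2) (2 * a + 3) (by omega),
            PN (2 * a + 1 + 1) (2 * a + 2) (by omega)] at h
        exact_mod_cast congrArg (Nat.cast : ℕ → ℤ) h
      have b3 : (P (2 * a + 4) : ℤ) = 2 * P (2 * a + 3) + P (2 * a + 2) := by
        have h := hrec (2 * a + 2)
        rw [PN (2 * a + 2 + 2) (2 * a + 4) (by omega),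
            PN (2 * a + 2 + 1) (2 * a + 3) (by omega)] at h
        exact_mod_cast congrArg (Nat.cast : ℕ → ℤ) h
      have c1 : Eaux (2 * a + 4) = Eaux (2 * a + 2) - 2 * Eaux (2 * a + 3) := by
        have h := Eaux_rec (2 * a + 2)
        rw [EB (2 * a + 2 + 2) (2 * a + 4) (by omega),
            EB (2 * a + 2 + 1) (2 * a + 3) (by omega)] at h
        exact h
      have c2 : Eaux (2 * a + 5) = Eaux (2 * a + 3) - 2 * Eaux (2 * a + 4) := by
        have h := Eaux_rec (2 * a + 3)
        rw [EB (2 * a + 3 + 2) (2 * a + 5) (by omega),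
            EB (2 * a + 3 + 1) (2 * a + 4) (by omega)] at h
        exact h
      constructor
      · rw [EB (2 * (a + 1) + 2) (2 * a + 4) (by ring),
            PN (2 * (a + 1)) (2 * a + 2) (by ring),
            PN (2 * (a + 1) + 1) (2 * a + 3) (by ring), c1, ihe, iho]
        linarith
      · rw [EB (2 * (a + 1) + 3) (2 * a + 5) (by ring),
            PN (2 * (a + 1) + 1) (2 * a + 3) (by ring),
            PN (2 * (a + 1) + 2) (2 * a + 4) (by ring), c2, c1, ihe, iho]
        linarith
  -- finish by parity of m
  rcases Nat.even_or_odd m with he | ho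
  · obtain ⟨b, hb⟩ := he
    obtain ⟨a, ha⟩ : ∃ a, b = a + 1 := ⟨b - 1, by omega⟩
    have hma : m = 2 * a + 2 := by omega
    have hE := (Eform a).2
    rw [EB (m + 1) (2 * a + 3) (by omega), hE] at final'
    have heq : P D + P (D + 1) = P (2 * a + 1) + P (2 * a + 2) := by exact_mod_cast final'
    have hDeq : D = 2 * a + 1 := by
      rcases lt_trichotomy D (2 * a + 1) with h | h | h
      · have l1 : P D < P (2 * a + 1) := mono h
        have l2 : P (D + 1) < P (2 * a + 2) := mono (by omega)
        omega
      · exact h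
      · have l1 : P (2 * a + 1) < P D := mono h
        have l2 : P (2 * a + 2) < P (D + 1) := mono (by omega)
        omega
    omega
  · obtain ⟨a, ha⟩ := ho
    have hE := (Eform a).1
    rw [EB (m + 1) (2 * a + 2) (by omega), hE] at final'
    have l1 : (0 : ℤ) ≤ P (2 * a) := Int.natCast_nonneg _
    have l2 : (1 : ℤ) ≤ P (2 * a + 1) := by exact_mod_cast Ppos (2 * a)
    have l3 : (0 : ℤ) ≤ P D := Int.natCast_nonneg _
    have l4 : (1 : ℤ) ≤ P (D + 1) := by exact_mod_cast Ppos D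
    linarith
end

section
/- For all n ≥ 0 and N ≥ 1, P(n+2N) < ∑_{i=0}^{2N} P(n+i) < P(n+2N+1), where P is the Pell sequence; in particular, the sum of an odd number 2N+1 ≥ 3 of consecutive Pell numbers is strictly between two consecutive Pell numbers and hence is never itself a Pell number. -/
theorem pell_odd_sum_between (P : ℕ → ℕ)
    (h0 : P 0 = 0) (h1 : P 1 = 1)
    (hrec : ∀ n, P (n + 2) = 2 * P (n + 1) + P n)
    (n N : ℕ) (hN : 1 ≤ N) :
    P (n + 2 * N) < (∑ i ∈ Finset.range (2 * N + 1), P (n + i)) ∧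
    (∑ i ∈ Finset.range (2 * N + 1), P (n + i)) < P (n + 2 * N + 1) := by
  have hpos : ∀ m, 1 ≤ P (m + 1) := by
    intro m
    induction m using Nat.strong_induction_on with
    | _ m ih =>
      match m with
      | 0 => simpa using h1.ge
      | Nat.succ k =>
        have h := ih k (Nat.lt_succ_self k)
        have e : P (k + 2) = 2 * P (k + 1) + P k := hrec k
        show 1 ≤ P (k + 2)
        omega
  induction N with
  | zero => omega
  | succ N ih =>
    rcases Nat.eq_or_lt_of_le hN with h | h
    · -- N + 1 = 1, so N = 0
      have hN0 : N = 0 := by omega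
      subst hN0
      have hs : (∑ i ∈ Finset.range (2 * 1 + 1), P (n + i)) = P n + P (n + 1) + P (n + 2) := by
        show (∑ i ∈ Finset.range 3, P (n + i)) = _
        rw [Finset.sum_range_succ, Finset.sum_range_succ, Finset.sum_range_one]
        norm_num
      have e3 : P (n + 3) = 2 * P (n + 2) + P (n + 1) := hrec (n + 1)
      have e2 : P (n + 2) = 2 * P (n + 1) + P n := hrec n
      have p1 := hpos n
      rw [hs]
      constructor
      · show P (n + 2) < _
        omega
      · show _ < P (n + 3)
        omega
    · have hN1 : 1 ≤ N := by omega
      obtain ⟨ihl, ihr⟩ := ih hN1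
      have hsum : (∑ i ∈ Finset.range (2 * (N + 1) + 1), P (n + i)) =
          (∑ i ∈ Finset.range (2 * N + 1), P (n + i)) + P (n + (2 * N + 1)) + P (n + (2 * N + 2)) := by
        have : 2 * (N + 1) + 1 = (2 * N + 1) + 1 + 1 := by ring
        rw [this, Finset.sum_range_succ, Finset.sum_range_succ]
      have e1 : P (n + 2 * N + 3) = 2 * P (n + 2 * N + 2) + P (n + 2 * N + 1) := hrec (n + 2 * N + 1)
      have e2 : P (n + 2 * N + 2) = 2 * P (n + 2 * N + 1) + P (n + 2 * N) := hrec (n + 2 * N)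
      have p1 := hpos (n + 2 * N)
      constructor
      · rw [hsum]
        have : 0 < (∑ i ∈ Finset.range (2 * N + 1), P (n + i)) := by
          calc 0 ≤ P (n + 2 * N) := Nat.zero_le _
          _ < _ := ihl
        have h2 : n + 2 * (N + 1) = n + (2 * N + 2) := by ring
        rw [h2]
        omega
      · rw [hsum]
        have h2 : n + 2 * (N + 1) + 1 = n + 2 * N + 3 := by ring
        have h3 : n + (2 * N + 1) = n + 2 * N + 1 := by ring
        have h4 : n + (2 * N + 2) = n + 2 * N + 2 := by ring
        rw [h2, h3, h4]
        omega
end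

section
/- Define the generalized Pell (k,k-1)-numbers by p(n)=2p(n-1)+p(n-k-1) for n ≥ k+1, with p(0)=...=p(k-1)=0 and p(k)=1. Then for all k ≥ 1 and n ≥ k, ∑_{i=0}^{2k+1} p(n+i) = 4·p(n+2k). -/
theorem gen_pell_sum (k : ℕ) (hk : 1 ≤ k) (p : ℕ → ℕ)
    (h0 : ∀ i, i < k → p i = 0) (hk1 : p k = 1)
    (hrec : ∀ n, k + 1 ≤ n → p n = 2 * p (n - 1) + p (n - k - 1))
    (n : ℕ) (hn : k ≤ n) :
    (∑ i ∈ Finset.range (2 * k + 2), p (n + i)) = 4 * p (n + 2 * k) := by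
  have key : ∀ i, p (n + k + 1 + i) = 2 * p (n + k + i) + p (n + i) := by
    intro i
    have h := hrec (n + k + 1 + i) (by omega)
    rw [show n + k + 1 + i - 1 = n + k + i by omega,
        show n + k + 1 + i - k - 1 = n + i by omega] at h
    exact h
  have hsplit : (∑ i ∈ Finset.range (2 * k + 2), p (n + i))
      = (∑ i ∈ Finset.range (k + 1), p (n + i))
        + (∑ i ∈ Finset.range (k + 1), p (n + k + 1 + i)) := by
    rw [show 2 * k + 2 = (k + 1) + (k + 1) by ring, Finset.sum_range_add]
    congr 1
    apply Finset.sum_congr rfl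
    intro i _
    congr 1
    omega
  have hB : (∑ i ∈ Finset.range (k + 1), p (n + k + 1 + i))
      = 2 * (∑ i ∈ Finset.range (k + 1), p (n + k + i))
        + (∑ i ∈ Finset.range (k + 1), p (n + i)) := by
    rw [Finset.mul_sum, ← Finset.sum_add_distrib]
    exact Finset.sum_congr rfl fun i _ => key i
  have hshiftB : (∑ i ∈ Finset.range (k + 1), p (n + k + 1 + i))
      = (∑ i ∈ Finset.range k, p (n + k + 1 + i)) + p (n + 2 * k + 1) := by
    rw [Finset.sum_range_succ, show n + k + 1 + k = n + 2 * k + 1 by omega]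
  have hshiftA : (∑ i ∈ Finset.range (k + 1), p (n + k + i))
      = (∑ i ∈ Finset.range k, p (n + k + 1 + i)) + p (n + k) := by
    rw [Finset.sum_range_succ']
    congr 1
    apply Finset.sum_congr rfl
    intro i _
    congr 1
    omega
  have hrec2 : p (n + 2 * k + 1) = 2 * p (n + 2 * k) + p (n + k) := by
    have h := hrec (n + 2 * k + 1) (by omega)
    rw [show n + 2 * k + 1 - 1 = n + 2 * k by omega,
        show n + 2 * k + 1 - k - 1 = n + k by omega] at h
    exact h
  omega
end
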